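/- Let t > 1 be a real number and let h_t(x) = e^{tx}(1−x) − 1. Then h_t has a unique positive real root α, and α satisfies 1 − 1/t² < α < 1. -/

import Mathlib

open Real Set

/-- For real `t > 1`, the function `h_t(x) = e^{tx}(1−x) − 1` has a unique positive
real root `α`, and `1 − 1/t² < α < 1`. -/
theorem unique_positive_root (t : ℝ) (ht : 1 < t) :
    ∃ α : ℝ, (0 < α ∧ Real.exp (t * α) * (1 - α) - 1 = 0) ∧
      (∀ β : ℝ, 0 < β → Real.exp (t * β) * (1 - β) - 1 = 0 → β = α) ∧
      1 - 1 / t ^ 2 < α ∧ α < 1 := by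
  have ht0 : (0 : ℝ) < t := lt_trans one_pos ht
  set h : ℝ → ℝ := fun x => Real.exp (t * x) * (1 - x) - 1 with hh
  have hderiv : ∀ x : ℝ, HasDerivAt h (Real.exp (t * x) * (t * (1 - x) - 1)) x := by
    intro x
    have h1 : HasDerivAt (fun x : ℝ => t * x) t x := by
      simpa using (hasDerivAt_id x).const_mul t
    have h2 : HasDerivAt (fun x : ℝ => Real.exp (t * x)) (Real.exp (t * x) * t) x := h1.exp
    have h3 : HasDerivAt (fun x : ℝ => 1 - x) (-1) x := by
      simpa using (hasDerivAt_id x).const_sub 1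
    have := (h2.mul h3).sub_const 1
    refine this.congr_deriv ?_
    ring
  have hcont : Continuous h := by
    apply Continuous.sub
    · exact (Real.continuous_exp.comp (continuous_const.mul continuous_id)).mul
        (continuous_const.sub continuous_id)
    · exact continuous_const
  set m : ℝ := 1 - 1 / t with hm
  have hinv : t * (1 / t) = 1 := mul_one_div_cancel ht0.ne'
  have hm0 : 0 < m := by
    have : 1 / t < 1 := by rw [div_lt_one ht0]; exact ht
    simp only [hm]; linarith
  have hm1 : m < 1 := by
    have : 0 < 1 / t := by positivity
    simp only [hm]; linarith
  have hmono : StrictMonoOn h (Icc 0 m) := by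
    apply strictMonoOn_of_deriv_pos (convex_Icc 0 m) hcont.continuousOn
    intro x hx
    rw [interior_Icc] at hx
    rw [(hderiv x).deriv]
    have hx2 : x < 1 - 1 / t := hx.2
    have : 0 < t * (1 - x) - 1 := by nlinarith [hx.2]
    positivity
  have hanti : StrictAntiOn h (Ici m) := by
    apply strictAntiOn_of_deriv_neg (convex_Ici m) hcont.continuousOn
    intro x hx
    rw [interior_Ici] at hx
    rw [(hderiv x).deriv]
    have : t * (1 - x) - 1 < 0 := by
      have : 1 - 1 / t < x := hx
      nlinarith
    have he : 0 < Real.exp (t * x) := Real.exp_pos _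
    nlinarith
  have h0 : h 0 = 0 := by simp [hh]
  have hmpos : 0 < h m := by
    have := hmono (left_mem_Icc.mpr hm0.le) (right_mem_Icc.mpr hm0.le) hm0
    rwa [h0] at this
  have h1neg : h 1 = -1 := by simp [hh]
  -- existence via IVT on [m, 1]
  have hsub : (0 : ℝ) ∈ Icc (h 1) (h m) := by
    constructor
    · rw [h1neg]; linarith
    · exact hmpos.le
  obtain ⟨α, hαmem, hα0⟩ := intermediate_value_Icc' hm1.le hcont.continuousOn hsub
  have hαm : m < α := by
    rcases lt_or_eq_of_le hαmem.1 with h' | h'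
    · exact h'
    · exfalso; rw [← h'] at hα0; rw [hα0] at hmpos; exact lt_irrefl 0 hmpos
  have hα1 : α < 1 := by
    rcases lt_or_eq_of_le hαmem.2 with h' | h'
    · exact h'
    · exfalso; rw [h'] at hα0; rw [hα0] at h1neg; norm_num at h1neg
  have hαpos : 0 < α := lt_trans hm0 hαm
  refine ⟨α, ⟨hαpos, hα0⟩, ?_, ?_, hα1⟩
  · -- uniqueness
    intro β hβ0 hβroot
    have hβroot' : h β = 0 := hβroot
    have hβm : m < β := by
      by_contra hle
      push_neg at hle
      have := hmono (left_mem_Icc.mpr hm0.le) ⟨hβ0.le, hle⟩ hβ0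
      rw [h0, hβroot'] at this
      exact lt_irrefl 0 this
    exact hanti.injOn (le_of_lt hβm) (le_of_lt hαm) (by rw [hβroot', hα0])
  · -- lower bound: h (1 - 1/t²) > 0
    set c : ℝ := 1 - 1 / t ^ 2 with hc
    have ht2 : (0 : ℝ) < t ^ 2 := by positivity
    have hcm : m < c := by
      have : 1 / t ^ 2 < 1 / t := by
        rw [div_lt_div_iff₀ ht2 ht0]
        nlinarith
      simp only [hc, hm]; linarith
    have hcval : h c = Real.exp (t - 1 / t) * (1 / t ^ 2) - 1 := by
      simp only [hh, hc]
      have h1 : t * (1 - 1 / t ^ 2) = t - 1 / t := by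
        field_simp
      have h2 : 1 - (1 - 1 / t ^ 2) = 1 / t ^ 2 := by ring
      rw [h1, h2]
    have hs : 0 < Real.log t := Real.log_pos ht
    have hsinh : Real.log t < Real.sinh (Real.log t) := Real.self_lt_sinh_iff.mpr hs
    have hexp : t - 1 / t = 2 * Real.sinh (Real.log t) := by
      rw [Real.sinh_eq, Real.exp_log ht0, Real.exp_neg, Real.exp_log ht0]
      ring
    have hgt : Real.log (t ^ 2) < t - 1 / t := by
      rw [hexp, Real.log_pow]
      push_cast
      linarith
    have hexpgt : t ^ 2 < Real.exp (t - 1 / t) := by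
      calc t ^ 2 = Real.exp (Real.log (t ^ 2)) := (Real.exp_log ht2).symm
        _ < Real.exp (t - 1 / t) := Real.exp_lt_exp.mpr hgt
    have hcpos : 0 < h c := by
      rw [hcval]
      rw [sub_pos]
      rw [mul_one_div, lt_div_iff₀ ht2, one_mul]
      exact hexpgt
    -- c < α since h is strictly decreasing on [m, ∞), h c > 0 = h α
    by_contra hle
    push_neg at hle
    rcases lt_or_eq_of_le hle with h' | h'
    · have := hanti (le_of_lt hαm) (le_of_lt hcm) h'
      rw [hα0] at this
      exact absurd hcpos (not_lt.mpr this.le)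
    · rw [h'] at hα0
      have : (0:ℝ) < h c := hcpos
      rw [hα0] at this
      exact lt_irrefl 0 this
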